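/- Let R be a subring of a ring T with the same identity, and let n be a positive integer. Then the rational closure of Mat_n(R) in Mat_n(T) equals Mat_n(R'), where R' is the rational closure of R in T. -/

import Mathlib

/-- The rational closure of a subset `R` of a ring `T`: all entries of inverses of square
matrices over `R` that are invertible over `T`. -/
def ratClosure {T : Type*} [Ring T] (R : Set T) : Set T :=
  {x | ∃ (n : ℕ) (A B : Matrix (Fin n) (Fin n) T),
    (∀ i j, A i j ∈ R) ∧ A * B = 1 ∧ B * A = 1 ∧ ∃ i j, x = B i j}

open Matrix

section Aux

variable {T : Type*} [Ring T]

lemma mem_ratClosure_of_equiv (R : Set T) {ι : Type*} [Fintype ι] [DecidableEq ι]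
    (A B : Matrix ι ι T) (hA : ∀ i j, A i j ∈ R) (h1 : A * B = 1) (h2 : B * A = 1) (i j : ι) :
    B i j ∈ ratClosure R := by
  let e := Fintype.equivFin ι
  refine ⟨Fintype.card ι, A.submatrix e.symm e.symm, B.submatrix e.symm e.symm,
    fun p q => hA _ _, ?_, ?_, e i, e j, by simp⟩
  · rw [Matrix.submatrix_mul_equiv, h1, Matrix.submatrix_one_equiv]
  · rw [Matrix.submatrix_mul_equiv, h2, Matrix.submatrix_one_equiv]

lemma entries_mul_mem (R : Subring T) {ι κ σ : Type*} [Fintype κ]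
    {A : Matrix ι κ T} {B : Matrix κ σ T} (hA : ∀ i j, A i j ∈ R) (hB : ∀ i j, B i j ∈ R)
    (i : ι) (j : σ) : (A * B) i j ∈ R := by
  rw [Matrix.mul_apply]
  exact Subring.sum_mem _ fun k _ => R.mul_mem (hA i k) (hB k j)

lemma std_entries (R : Subring T) {ι κ : Type*} [DecidableEq ι] [DecidableEq κ]
    (i : ι) (j : κ) (p : ι) (q : κ) : Matrix.single i j (1 : T) p q ∈ R := by
  simp only [Matrix.single, Matrix.of_apply]
  split
  · exact one_mem R
  · exact zero_mem R

lemma one_entries (R : Subring T) {ι : Type*} [DecidableEq ι] (i j : ι) :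
    (1 : Matrix ι ι T) i j ∈ R := by
  rw [Matrix.one_apply]
  split
  · exact one_mem R
  · exact zero_mem R

lemma ratClosure_block (R : Subring T) {k k' : ℕ}
    (A B : Matrix (Fin k) (Fin k) T) (A' B' : Matrix (Fin k') (Fin k') T)
    (G : Matrix (Fin k) (Fin k') T)
    (hA : ∀ i j, A i j ∈ R) (hA' : ∀ i j, A' i j ∈ R) (hG : ∀ i j, G i j ∈ R)
    (h1 : A * B = 1) (h2 : B * A = 1) (h1' : A' * B' = 1) (h2' : B' * A' = 1)
    (i : Fin k) (j' : Fin k') :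
    (-(B * G * B')) i j' ∈ ratClosure (R : Set T) := by
  have e1 : A * -(B * G * B') + G * B' = 0 := by
    rw [Matrix.mul_neg, ← Matrix.mul_assoc, ← Matrix.mul_assoc, h1, Matrix.one_mul,
      neg_add_cancel]
  have e2 : B * G + -(B * G * B') * A' = 0 := by
    rw [Matrix.neg_mul, Matrix.mul_assoc (B * G), h2', Matrix.mul_one, add_neg_cancel]
  have key1 : Matrix.fromBlocks A G 0 A' * Matrix.fromBlocks B (-(B * G * B')) 0 B' = 1 := by
    rw [Matrix.fromBlocks_multiply]
    simp only [Matrix.mul_zero, Matrix.zero_mul, add_zero, zero_add, h1, h1', e1]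
    exact Matrix.fromBlocks_one
  have key2 : Matrix.fromBlocks B (-(B * G * B')) 0 B' * Matrix.fromBlocks A G 0 A' = 1 := by
    rw [Matrix.fromBlocks_multiply]
    simp only [Matrix.mul_zero, Matrix.zero_mul, add_zero, zero_add, h2, h2', e2]
    exact Matrix.fromBlocks_one
  have hE : ∀ p q, Matrix.fromBlocks A G 0 A' p q ∈ R := by
    rintro (p | p) (q | q)
    · exact hA p q
    · exact hG p q
    · exact zero_mem R
    · exact hA' p q
  have := mem_ratClosure_of_equiv (R : Set T) _ _ hE key1 key2 (Sum.inl i) (Sum.inr j')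
  simpa using this

lemma stdBasisMatrix_mul_apply {k k' m : ℕ} (B' : Matrix (Fin k') (Fin m) T)
    (i : Fin k) (i' : Fin k') (p : Fin k) (q : Fin m) :
    (Matrix.single i i' (1 : T) * B') p q = if p = i then B' i' q else 0 := by
  simp [Matrix.mul_apply, Matrix.single, ite_and, eq_comm (a := i)]

lemma mul_stdBasisMatrix_apply {k k' m : ℕ} (B : Matrix (Fin m) (Fin k) T)
    (j : Fin k) (j' : Fin k') (p : Fin m) (q : Fin k') :
    (B * Matrix.single j j' (1 : T)) p q = if q = j' then B p j else 0 := by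
  simp [Matrix.mul_apply, Matrix.single, ite_and, eq_comm (a := j), eq_comm (a := j')]

lemma mul_std_mul {k k' : ℕ} (B : Matrix (Fin k) (Fin k) T) (B' : Matrix (Fin k') (Fin k') T)
    (i j : Fin k) (i' j' : Fin k') :
    (B * Matrix.single j i' (1 : T) * B') i j' = B i j * B' i' j' := by
  rw [Matrix.mul_apply, Finset.sum_eq_single i']
  · rw [mul_stdBasisMatrix_apply, if_pos rfl]
  · intro q _ hq
    rw [mul_stdBasisMatrix_apply, if_neg hq, zero_mul]
  · simp

lemma ratClosure_one_mem (R : Subring T) : (1 : T) ∈ ratClosure (R : Set T) :=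
  ⟨1, 1, 1, fun i j => one_entries R i j, one_mul 1, one_mul 1, 0, 0,
    (Matrix.one_apply_eq 0).symm⟩

lemma ratClosure_zero_mem (R : Subring T) : (0 : T) ∈ ratClosure (R : Set T) :=
  ⟨2, 1, 1, fun i j => one_entries R i j, one_mul 1, one_mul 1, 0, 1,
    (Matrix.one_apply_ne (by decide)).symm⟩

lemma ratClosure_neg_one_mem (R : Subring T) : (-1 : T) ∈ ratClosure (R : Set T) :=
  ⟨1, -1, -1, fun i j => R.neg_mem (one_entries R i j),
    by rw [neg_mul_neg, one_mul], by rw [neg_mul_neg, one_mul], 0, 0,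
    by rw [Matrix.neg_apply, Matrix.one_apply_eq]⟩

lemma subring_subset_ratClosure (R : Subring T) : (R : Set T) ⊆ ratClosure (R : Set T) := by
  intro x hx
  refine ⟨2, !![1, -x; 0, 1], !![1, x; 0, 1], ?_, ?_, ?_, 0, 1, by simp⟩
  · intro i j
    fin_cases i <;> fin_cases j <;> simp <;>
      first
        | exact one_mem R
        | exact zero_mem R
        | exact R.neg_mem hx
        | exact hx
  · ext i j
    fin_cases i <;> fin_cases j <;>
      simp [Matrix.mul_apply, Fin.sum_univ_two, Matrix.one_apply]
  · ext i j
    fin_cases i <;> fin_cases j <;>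
      simp [Matrix.mul_apply, Fin.sum_univ_two, Matrix.one_apply]

lemma ratClosure_mul_mem (R : Subring T) {x y : T} (hx : x ∈ ratClosure (R : Set T))
    (hy : y ∈ ratClosure (R : Set T)) : x * y ∈ ratClosure (R : Set T) := by
  obtain ⟨k, A, B, hA, h1, h2, i, j, rfl⟩ := hx
  obtain ⟨k', A', B', hA', h1', h2', i', j', rfl⟩ := hy
  have key := ratClosure_block R A B A' B' (-(Matrix.single j i' (1 : T)))
    hA hA' (fun p q => R.neg_mem (std_entries R j i' p q)) h1 h2 h1' h2' i j'
  have : (-(B * -(Matrix.single j i' (1 : T)) * B')) i j' = B i j * B' i' j' := by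
    rw [Matrix.mul_neg, Matrix.neg_mul, neg_neg, mul_std_mul]
  rwa [this] at key

lemma ratClosure_add_mem (R : Subring T) {x y : T} (hx : x ∈ ratClosure (R : Set T))
    (hy : y ∈ ratClosure (R : Set T)) : x + y ∈ ratClosure (R : Set T) := by
  obtain ⟨k, A, B, hA, h1, h2, i, j, rfl⟩ := hx
  obtain ⟨k', A', B', hA', h1', h2', i', j', rfl⟩ := hy
  set G : Matrix (Fin k) (Fin k') T :=
    -(A * Matrix.single i i' (1 : T) + Matrix.single j j' (1 : T) * A') with hGdef
  have hG : ∀ p q, G p q ∈ R := fun p q => by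
    rw [hGdef, Matrix.neg_apply, Matrix.add_apply]
    exact R.neg_mem (R.add_mem
      (entries_mul_mem R hA (std_entries R i i') p q)
      (entries_mul_mem R (std_entries R j j') hA' p q))
  have key := ratClosure_block R A B A' B' G hA hA' hG h1 h2 h1' h2' i j'
  have hmat : -(B * G * B')
      = Matrix.single i i' (1 : T) * B' + B * Matrix.single j j' (1 : T) := by
    rw [hGdef, Matrix.mul_neg, Matrix.neg_mul, neg_neg, Matrix.mul_add, Matrix.add_mul,
      ← Matrix.mul_assoc B A, h2, Matrix.one_mul,
      ← Matrix.mul_assoc B (Matrix.single j j' (1 : T)) A',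
      Matrix.mul_assoc (B * Matrix.single j j' (1 : T)) A' B', h1', Matrix.mul_one]
  have : (-(B * G * B')) i j' = B i j + B' i' j' := by
    rw [hmat, Matrix.add_apply, stdBasisMatrix_mul_apply, mul_stdBasisMatrix_apply,
      if_pos rfl, if_pos rfl, add_comm]
  rwa [this] at key

/-- matrices with entries in `R`, as a subring. -/
def matSubring (R : Subring T) (n : ℕ) : Subring (Matrix (Fin n) (Fin n) T) where
  carrier := {M : Matrix (Fin n) (Fin n) T | ∀ i j, M i j ∈ (R : Set T)}
  zero_mem' i j := by simpa using R.zero_mem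
  one_mem' i j := one_entries R i j
  add_mem' ha hb i j := by rw [Matrix.add_apply]; exact R.add_mem (ha i j) (hb i j)
  neg_mem' ha i j := by rw [Matrix.neg_apply]; exact R.neg_mem (ha i j)
  mul_mem' ha hb i j := entries_mul_mem R ha hb i j

/-- the rational closure of a subring, as a subring. -/
def ratSubring (R : Subring T) : Subring T where
  carrier := ratClosure (R : Set T)
  zero_mem' := ratClosure_zero_mem R
  one_mem' := ratClosure_one_mem R
  add_mem' := ratClosure_add_mem R
  mul_mem' := ratClosure_mul_mem R
  neg_mem' {x} hx := by
    have := ratClosure_mul_mem R hx (ratClosure_neg_one_mem R)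
    rwa [mul_neg_one] at this

lemma scalar_mem_ratClosure (R : Subring T) (n : ℕ) {x : T}
    (hx : x ∈ ratClosure (R : Set T)) :
    Matrix.scalar (Fin n) x ∈ ratClosure ((matSubring R n : Set (Matrix (Fin n) (Fin n) T))) := by
  obtain ⟨k, A, B, hA, h1, h2, i, j, rfl⟩ := hx
  refine ⟨k, ((Matrix.scalar (Fin n)).mapMatrix (m := Fin k)) A,
    ((Matrix.scalar (Fin n)).mapMatrix (m := Fin k)) B, ?_, ?_, ?_, i, j, ?_⟩
  · intro p q a b
    simp only [RingHom.mapMatrix_apply, Matrix.map_apply, Matrix.scalar_apply,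
      Matrix.diagonal_apply]
    split
    · exact hA p q
    · exact R.zero_mem
  · rw [← _root_.map_mul, h1, _root_.map_one]
  · rw [← _root_.map_mul, h2, _root_.map_one]
  · simp [RingHom.mapMatrix_apply, Matrix.map_apply]

end Aux

/-- The rational closure of `Mat_n(R)` in `Mat_n(T)` is `Mat_n(R')`, where `R'` is
the rational closure of `R` in `T`. -/
theorem stmt_4 {T : Type*} [Ring T] (R : Subring T) (n : ℕ) (hn : 0 < n) :
    ratClosure {M : Matrix (Fin n) (Fin n) T | ∀ i j, M i j ∈ (R : Set T)} =
      {M : Matrix (Fin n) (Fin n) T | ∀ i j, M i j ∈ ratClosure (R : Set T)} := by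
  ext M
  constructor
  · rintro ⟨m, A, B, hA, h1, h2, i, j, rfl⟩
    intro a b
    set f := Matrix.compRingEquiv (Fin m) (Fin n) T with hf
    have hBe : B i j a b = f B (i, a) (j, b) := by
      rfl
    rw [hBe]
    refine mem_ratClosure_of_equiv (R : Set T) (f A) (f B) ?_ ?_ ?_ (i, a) (j, b)
    · intro p q
      have : f A p q = A p.1 q.1 p.2 q.2 := by
        rfl
      rw [this]
      exact hA p.1 q.1 p.2 q.2
    · rw [← _root_.map_mul, h1, _root_.map_one]
    · rw [← _root_.map_mul, h2, _root_.map_one]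
  · intro hM
    have key : M ∈ ratSubring (matSubring R n) := by
      have hrw := Matrix.matrix_eq_sum_single M
      rw [show M = ∑ a : Fin n, ∑ b : Fin n, Matrix.single a b (M a b) from hrw]
      refine Subring.sum_mem _ fun a _ => Subring.sum_mem _ fun b _ => ?_
      have hsb : Matrix.single a b (M a b)
          = Matrix.scalar (Fin n) (M a b) * Matrix.single a b (1 : T) := by
        ext p q
        rw [Matrix.scalar_apply, Matrix.diagonal_mul]
        simp [Matrix.single, Matrix.of_apply, mul_ite]
      rw [hsb]
      exact mul_mem (scalar_mem_ratClosure R n (hM a b))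
        (subring_subset_ratClosure (matSubring R n) (std_entries R a b))
    exact key
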